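/- arXiv:2208.00454 — 4 statements merged into one kernel-verified Lean document; each statement's English description precedes it below -/
import Mathlib

section
/- Let λ : ℕ → ℝ satisfy λ_k ≥ c for all k, for some constant c > 0, let 0 < s < 1, and let x be an element of ℓ² (square-summable complex sequences). Then the function t ↦ t^{s-1} · (k ↦ e^{-t·λ_k} x_k) is Bochner integrable on (0, ∞) with values in ℓ², and (1/Γ(s)) ∫₀^∞ t^{s-1} (k ↦ e^{-t·λ_k} x_k) dt = (k ↦ λ_k^{-s} x_k) in ℓ². -/
open MeasureTheory

noncomputable def evalCLM (k : ℕ) : lp (fun _ : ℕ => ℂ) 2 →L[ℂ] ℂ :=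
  LinearMap.mkContinuous
    { toFun := fun f => f k
      map_add' := fun f g => rfl
      map_smul' := fun c f => rfl }
    1 (fun f => by
      show ‖f k‖ ≤ 1 * ‖f‖
      simpa using lp.norm_apply_le_norm (by norm_num : (2 : ENNReal) ≠ 0) f k)

/-- Spectral (multiplier) form of the Gamma-function representation of negative
fractional powers: if `λ_k ≥ c > 0`, `0 < s < 1`, `x ∈ ℓ²`, and `y t` is the ℓ²
sequence `k ↦ t^{s-1} e^{-tλ_k} x_k` while `z` is the ℓ² sequence `k ↦ λ_k^{-s} x_k`,
then `y` is Bochner integrable on `(0, ∞)` and `(1/Γ(s)) ∫₀^∞ y t dt = z`. -/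
theorem statement1 (lam : ℕ → ℝ) (c : ℝ) (hc : 0 < c) (hlam : ∀ k, c ≤ lam k)
    (s : ℝ) (hs0 : 0 < s) (hs1 : s < 1)
    (x : lp (fun _ : ℕ => ℂ) 2)
    (y : ℝ → lp (fun _ : ℕ => ℂ) 2)
    (hy : ∀ t : ℝ, 0 < t → ∀ k : ℕ,
      y t k = (t ^ (s - 1) : ℝ) * Real.exp (-t * lam k) * x k)
    (z : lp (fun _ : ℕ => ℂ) 2)
    (hz : ∀ k : ℕ, z k = (lam k ^ (-s) : ℝ) * x k) :
    IntegrableOn y (Set.Ioi (0 : ℝ)) ∧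
      (1 / Real.Gamma s) • ∫ t in Set.Ioi (0 : ℝ), y t = z := by
  have hp2 : (0:ℝ) < (2 : ENNReal).toReal := by norm_num
  -- the scalar majorant
  have hmaj : IntegrableOn (fun t : ℝ => t ^ (s - 1) * Real.exp (-c * t) * ‖x‖)
      (Set.Ioi 0) := by
    have := integrableOn_rpow_mul_exp_neg_mul_rpow (p := 1) (s := s - 1) (b := c)
      (by linarith) one_pos hc
    simp only [Real.rpow_one] at this
    exact this.mul_const _
  -- norm bound
  have hbound : ∀ t ∈ Set.Ioi (0:ℝ), ‖y t‖ ≤ t ^ (s - 1) * Real.exp (-c * t) * ‖x‖ := by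
    intro t ht
    rw [Set.mem_Ioi] at ht
    have ha : 0 ≤ t ^ (s - 1) * Real.exp (-c * t) := by positivity
    refine lp.norm_le_of_forall_sum_le hp2 (by positivity) (fun F => ?_)
    have h1 : ∀ k ∈ F, ‖y t k‖ ^ (2:ENNReal).toReal ≤
        (t ^ (s - 1) * Real.exp (-c * t)) ^ (2:ENNReal).toReal * ‖x k‖ ^ (2:ENNReal).toReal := by
      intro k _
      rw [← Real.mul_rpow ha (norm_nonneg _)]
      refine Real.rpow_le_rpow (norm_nonneg _) ?_ (by norm_num)
      rw [hy t ht k]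
      have : ‖((t ^ (s - 1) : ℝ) * Real.exp (-t * lam k) * x k : ℂ)‖
          = t ^ (s - 1) * Real.exp (-t * lam k) * ‖x k‖ := by
        rw [norm_mul, norm_mul, Complex.norm_real, Complex.norm_real,
          Real.norm_eq_abs, Real.norm_eq_abs, abs_of_nonneg (by positivity : (0:ℝ) ≤ t ^ (s-1)),
          Real.abs_exp]
      rw [this]
      have hexp : Real.exp (-t * lam k) ≤ Real.exp (-c * t) := by
        apply Real.exp_le_exp.2
        have := hlam k
        nlinarith
      have h0 : 0 ≤ t ^ (s - 1) := by positivity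
      exact mul_le_mul_of_nonneg_right (mul_le_mul_of_nonneg_left hexp h0) (norm_nonneg _)
    calc ∑ k ∈ F, ‖y t k‖ ^ (2:ENNReal).toReal
        ≤ ∑ k ∈ F, (t ^ (s - 1) * Real.exp (-c * t)) ^ (2:ENNReal).toReal
            * ‖x k‖ ^ (2:ENNReal).toReal := Finset.sum_le_sum h1
      _ = (t ^ (s - 1) * Real.exp (-c * t)) ^ (2:ENNReal).toReal
            * ∑ k ∈ F, ‖x k‖ ^ (2:ENNReal).toReal := by rw [Finset.mul_sum]
      _ ≤ (t ^ (s - 1) * Real.exp (-c * t)) ^ (2:ENNReal).toReal * ‖x‖ ^ (2:ENNReal).toReal := by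
            apply mul_le_mul_of_nonneg_left (lp.sum_rpow_le_norm_rpow hp2 x F)
            positivity
      _ = (t ^ (s - 1) * Real.exp (-c * t) * ‖x‖) ^ (2:ENNReal).toReal := by
            rw [Real.mul_rpow (by positivity) (norm_nonneg _)]
  -- measurability
  have hmeas : AEStronglyMeasurable y (volume.restrict (Set.Ioi (0:ℝ))) := by
    have hFN : ∀ N : ℕ, AEStronglyMeasurable
        (fun t : ℝ => ∑ k ∈ Finset.range N, lp.single 2 k (y t k))
        (volume.restrict (Set.Ioi (0:ℝ))) := by
      intro N
      apply Finset.aestronglyMeasurable_fun_sum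
      intro k _
      have : (fun t : ℝ => lp.single (E := fun _ : ℕ => ℂ) 2 k (y t k))
          =ᵐ[volume.restrict (Set.Ioi (0:ℝ))]
          fun t => ((Real.exp ((s - 1) * Real.log t) * Real.exp (-t * lam k) : ℝ) * x k : ℂ)
            • lp.single (E := fun _ : ℕ => ℂ) 2 k (1 : ℂ) := by
        filter_upwards [ae_restrict_mem measurableSet_Ioi] with t ht
        rw [hy t ht k, ← lp.single_smul, smul_eq_mul, mul_one,
          Real.rpow_def_of_pos ht]
        push_cast
        ring_nf
      refine AEStronglyMeasurable.congr ?_ this.symm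
      apply AEStronglyMeasurable.smul_const
      apply Measurable.aestronglyMeasurable
      refine Measurable.mul_const ?_ _
      exact Complex.measurable_ofReal.comp
        (((Real.measurable_log.const_mul _).exp).mul
          ((measurable_id.neg.mul_const (lam k)).exp))
    refine aestronglyMeasurable_of_tendsto_ae Filter.atTop hFN ?_
    filter_upwards [ae_restrict_mem measurableSet_Ioi] with t ht
    exact (lp.hasSum_single (by norm_num) (y t)).tendsto_sum_nat
  have hint : IntegrableOn y (Set.Ioi (0:ℝ)) := by
    refine Integrable.mono' hmaj hmeas ?_
    filter_upwards [ae_restrict_mem measurableSet_Ioi] with t ht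
    exact hbound t ht
  refine ⟨hint, ?_⟩
  have hΓ : Real.Gamma s ≠ 0 := (Real.Gamma_pos_of_pos hs0).ne'
  ext k
  have hcomm := (evalCLM k).integral_comp_comm hint
  have hlk : 0 < lam k := lt_of_lt_of_le hc (hlam k)
  have hcoord : ∫ t in Set.Ioi (0:ℝ), evalCLM k (y t)
      = ((1 / lam k) ^ s * Real.Gamma s : ℝ) * x k := by
    have h1 : ∫ t in Set.Ioi (0:ℝ), evalCLM k (y t)
        = ∫ t in Set.Ioi (0:ℝ), ((t ^ (s - 1) * Real.exp (-(lam k * t)) : ℝ) : ℂ) * x k := by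
      refine setIntegral_congr_fun measurableSet_Ioi (fun t ht => ?_)
      rw [Set.mem_Ioi] at ht
      show y t k = _
      rw [hy t ht k]
      push_cast
      ring_nf
    rw [h1, integral_mul_const]
    congr 1
    rw [← Real.integral_rpow_mul_exp_neg_mul_Ioi hs0 hlk]
    exact integral_ofReal
  have hval : (∫ t in Set.Ioi (0:ℝ), y t) k
      = ((1 / lam k) ^ s * Real.Gamma s : ℝ) * x k := by
    rw [← hcoord, hcomm]
    rfl
  have hsm : ((1 / Real.Gamma s) • ∫ t in Set.Ioi (0:ℝ), y t) k
      = ((1 / Real.Gamma s : ℝ) : ℂ) * ((∫ t in Set.Ioi (0:ℝ), y t) k) := by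
    rw [lp.coeFn_smul]
    simp [Complex.real_smul]
  have hr : (1 / Real.Gamma s) * ((1 / lam k) ^ s * Real.Gamma s) = lam k ^ (-s) := by
    have h2 : (1 / lam k) ^ s = (lam k ^ s)⁻¹ := by
      rw [one_div, Real.inv_rpow hlk.le]
    rw [h2, Real.rpow_neg hlk.le]
    field_simp
  rw [hsm, hval, hz k, ← mul_assoc, ← Complex.ofReal_mul, hr]
end

section
/- Let φ : ℝ → ℂ be measurable with φ(t) = 0 for all t ≤ 0, and suppose there exist constants C > 0 and c > 0 such that |φ(t)| ≤ C e^{-c t} for all t > 0. If ∫₀^∞ t^k φ(t) dt = 0 for every natural number k, then φ(t) = 0 for almost every t ∈ ℝ. -/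
open MeasureTheory Set

lemma aux_int (n : ℕ) {b : ℝ} (hb : 0 < b) :
    IntegrableOn (fun t : ℝ => t ^ n * Real.exp (-b * t)) (Ioi 0) := by
  have h := integrableOn_rpow_mul_exp_neg_mul_rpow (p := 1) (s := (n : ℝ))
    (by exact_mod_cast neg_one_lt_zero.trans_le (Nat.cast_nonneg n)) zero_lt_one hb
  simpa [Real.rpow_natCast, Real.rpow_one] using h

lemma aux_int_val (n : ℕ) {b : ℝ} (hb : 0 < b) :
    ∫ t in Ioi (0:ℝ), t ^ n * Real.exp (-b * t) = ((Nat.factorial n) : ℝ) / b ^ (n + 1) := by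
  have h := Real.integral_rpow_mul_exp_neg_mul_Ioi (a := (n : ℝ) + 1) (r := b)
    (by positivity) hb
  rw [show ((n : ℝ) + 1 - 1) = (n : ℝ) by ring] at h
  rw [Real.Gamma_nat_eq_factorial] at h
  calc ∫ t in Ioi (0:ℝ), t ^ n * Real.exp (-b * t)
      = ∫ t in Ioi (0:ℝ), t ^ ((n : ℝ)) * Real.exp (-(b * t)) := by
        refine setIntegral_congr_fun measurableSet_Ioi (fun t ht => ?_)
        rw [Real.rpow_natCast, neg_mul]
    _ = (1 / b) ^ ((n : ℝ) + 1) * (Nat.factorial n) := h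
    _ = ((Nat.factorial n) : ℝ) / b ^ (n + 1) := by
        rw [show ((n : ℝ) + 1) = ((n + 1 : ℕ) : ℝ) by push_cast; ring,
          Real.rpow_natCast, div_pow, one_pow]
        ring

lemma pow_div_factorial_le_exp {x : ℝ} (hx : 0 ≤ x) (k : ℕ) :
    x ^ k / ((Nat.factorial k) : ℝ) ≤ Real.exp x :=
  calc x ^ k / ((Nat.factorial k) : ℝ) ≤ ∑ i ∈ Finset.range (k + 1), x ^ i / ((Nat.factorial i) : ℝ) :=
        Finset.single_le_sum (f := fun i => x ^ i / ((Nat.factorial i) : ℝ))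
          (fun i _ => by positivity) (Finset.self_mem_range_succ k)
    _ ≤ Real.exp x := Real.sum_le_exp_of_nonneg hx _

lemma swap_lemma (ψ : ℝ → ℂ) (hmeas : Measurable ψ) {C b h : ℝ} (hC : 0 < C) (hb : 0 < b)
    (hbound : ∀ t : ℝ, 0 < t → ‖ψ t‖ ≤ C * Real.exp (-b * t))
    (hh0 : 0 ≤ h) (hhb : h < b)
    (hmom : ∀ k : ℕ, ∫ t in Ioi (0:ℝ), (t : ℂ) ^ k * ψ t = 0) (k : ℕ) :
    ∫ t in Ioi (0:ℝ), (t : ℂ) ^ k * (Real.exp (-(h * t)) : ℂ) * ψ t = 0 := by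
  set b₁ : ℝ := (h + b) / 2 with hb₁def
  have hb₁pos : 0 < b₁ := by simp only [hb₁def]; linarith
  have hhb₁ : h < b₁ := by simp only [hb₁def]; linarith
  have hb₁b : b₁ < b := by simp only [hb₁def]; linarith
  set δ : ℝ := b - b₁ with hδdef
  have hδ : 0 < δ := by simp only [hδdef]; linarith
  set C' : ℝ := C * (((Nat.factorial k) : ℝ) / δ ^ k) with hC'def
  have hC' : 0 < C' := by positivity
  clear_value b₁ δ C'
  set F : ℕ → ℝ → ℂ := fun j t => ((-(h:ℂ) * t) ^ j / ((Nat.factorial j) : ℂ)) * ((t:ℂ) ^ k * ψ t)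
    with hFdef
  set G : ℕ → ℝ → ℝ := fun j t => (h ^ j / ((Nat.factorial j) : ℝ)) * C' * (t ^ j * Real.exp (-b₁ * t))
    with hGdef
  -- pointwise norm bound
  have hnorm : ∀ j : ℕ, ∀ t ∈ Ioi (0:ℝ), ‖F j t‖ ≤ G j t := by
    intro j t ht
    have ht0 : (0:ℝ) < t := ht
    have e1 : ‖F j t‖ = (h * t) ^ j / ((Nat.factorial j) : ℝ) * (t ^ k * ‖ψ t‖) := by
      simp only [hFdef, norm_mul, norm_div, norm_pow, norm_neg, Complex.norm_real,
        Real.norm_eq_abs, Complex.norm_natCast, map_mul]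
      rw [abs_of_nonneg hh0, abs_of_nonneg ht0.le]
    rw [e1]
    have e2 : t ^ k * ‖ψ t‖ ≤ C' * Real.exp (-b₁ * t) := by
      have h1 : ‖ψ t‖ ≤ C * Real.exp (-b * t) := hbound t ht0
      have h2 : t ^ k ≤ (((Nat.factorial k) : ℝ) / δ ^ k) * Real.exp (δ * t) := by
        have h3 := pow_div_factorial_le_exp (mul_nonneg hδ.le ht0.le) k
        rw [mul_pow] at h3
        rw [div_mul_eq_mul_div, le_div_iff₀ (by positivity)]
        rw [div_le_iff₀ (by positivity : (0:ℝ) < ((Nat.factorial k) : ℝ))] at h3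
        nlinarith [Real.exp_pos (δ * t)]
      have e3 : Real.exp (δ * t) * Real.exp (-b * t) = Real.exp (-b₁ * t) := by
        rw [← Real.exp_add]; congr 1; simp only [hδdef]; ring
      calc t ^ k * ‖ψ t‖ ≤ ((((Nat.factorial k) : ℝ) / δ ^ k) * Real.exp (δ * t)) *
            (C * Real.exp (-b * t)) := by
            apply mul_le_mul h2 h1 (norm_nonneg _)
            positivity
        _ = C' * (Real.exp (δ * t) * Real.exp (-b * t)) := by rw [hC'def]; ring
        _ = C' * Real.exp (-b₁ * t) := by rw [e3]
    calc (h * t) ^ j / ((Nat.factorial j) : ℝ) * (t ^ k * ‖ψ t‖)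
        ≤ (h * t) ^ j / ((Nat.factorial j) : ℝ) * (C' * Real.exp (-b₁ * t)) := by
          apply mul_le_mul_of_nonneg_left e2 (by positivity)
      _ = G j t := by simp only [hGdef, mul_pow]; ring
  have hGint : ∀ j : ℕ, IntegrableOn (G j) (Ioi 0) := fun j =>
    ((aux_int j hb₁pos).const_mul _)
  have hFmeas : ∀ j : ℕ, AEStronglyMeasurable (F j) (volume.restrict (Ioi 0)) := by
    intro j
    apply Measurable.aestronglyMeasurable
    simp only [hFdef]
    fun_prop
  have hFint : ∀ j : ℕ, IntegrableOn (F j) (Ioi 0) := by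
    intro j
    apply Integrable.mono' (hGint j) (hFmeas j)
    rw [ae_restrict_iff' measurableSet_Ioi]
    exact Filter.Eventually.of_forall (hnorm j)
  have hGval : ∀ j : ℕ, ∫ t in Ioi (0:ℝ), G j t = (C' / b₁) * (h / b₁) ^ j := by
    intro j
    simp only [hGdef]
    rw [integral_const_mul, aux_int_val j hb₁pos]
    rw [div_pow]
    field_simp
    ring
  have hFsum : Summable (fun j => ∫ t in Ioi (0:ℝ), ‖F j t‖) := by
    apply Summable.of_nonneg_of_le
      (fun j => integral_nonneg (fun t => norm_nonneg _))
      (fun j => ?_)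
      (((summable_geometric_of_lt_one (by positivity)
        ((div_lt_one hb₁pos).2 hhb₁)).mul_left (C' / b₁)))
    calc ∫ t in Ioi (0:ℝ), ‖F j t‖ ≤ ∫ t in Ioi (0:ℝ), G j t := by
          apply setIntegral_mono_on (hFint j).norm (hGint j) measurableSet_Ioi (hnorm j)
      _ = (C' / b₁) * (h / b₁) ^ j := hGval j
  have swap := integral_tsum_of_summable_integral_norm (μ := volume.restrict (Ioi 0))
    hFint hFsum
  have hFzero : ∀ j : ℕ, ∫ t in Ioi (0:ℝ), F j t = 0 := by
    intro j
    have e : ∀ t ∈ Ioi (0:ℝ), F j t =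
        ((-(h:ℂ)) ^ j / ((Nat.factorial j) : ℂ)) * ((t:ℂ) ^ (j + k) * ψ t) := by
      intro t ht
      simp only [hFdef, mul_pow, pow_add]
      ring
    rw [setIntegral_congr_fun measurableSet_Ioi e, integral_const_mul, hmom (j + k),
      mul_zero]
  have hpt : ∀ t : ℝ, ∑' j, F j t = (t : ℂ) ^ k * (Real.exp (-(h * t)) : ℂ) * ψ t := by
    intro t
    simp only [hFdef]
    rw [tsum_mul_right]
    have e : (∑' j : ℕ, (-(h:ℂ) * t) ^ j / ((Nat.factorial j) : ℂ)) = Complex.exp (-(h:ℂ) * t) := by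
      rw [Complex.exp_eq_exp_ℂ, NormedSpace.exp_eq_tsum_div]
    rw [e]
    have e2 : (Real.exp (-(h * t)) : ℂ) = Complex.exp (-(h:ℂ) * t) := by
      rw [Complex.ofReal_exp]
      congr 1
      push_cast
      ring
    rw [e2]
    ring
  calc ∫ t in Ioi (0:ℝ), (t : ℂ) ^ k * (Real.exp (-(h * t)) : ℂ) * ψ t
      = ∫ t in Ioi (0:ℝ), ∑' j, F j t := by
        refine setIntegral_congr_fun measurableSet_Ioi (fun t ht => ?_)
        rw [hpt t]
    _ = ∑' j, ∫ t in Ioi (0:ℝ), F j t := swap.symm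
    _ = 0 := by simp [hFzero]
/-- If `φ : ℝ → ℂ` is measurable, vanishes on `(-∞, 0]`, satisfies the exponential
bound `|φ(t)| ≤ C e^{-ct}` for `t > 0`, and all its moments `∫₀^∞ t^k φ(t) dt` vanish,
then `φ = 0` almost everywhere. -/
theorem statement2 (φ : ℝ → ℂ) (hmeas : Measurable φ)
    (hsupp : ∀ t : ℝ, t ≤ 0 → φ t = 0)
    (C c : ℝ) (hC : 0 < C) (hc : 0 < c)
    (hbound : ∀ t : ℝ, 0 < t → ‖φ t‖ ≤ C * Real.exp (-c * t))
    (hmom : ∀ k : ℕ, ∫ t in Set.Ioi (0 : ℝ), (t : ℂ) ^ k * φ t = 0) :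
    ∀ᵐ t : ℝ, φ t = 0 := by
  set a : ℝ := c / 2 with hadef
  have ha : 0 < a := by simp only [hadef]; positivity
  have hac : a < c := by simp only [hadef]; linarith
  clear_value a
  -- Step 1: all "shifted" moments vanish
  have key : ∀ n : ℕ, ∀ k : ℕ,
      ∫ t in Set.Ioi (0:ℝ), (t:ℂ) ^ k * ((Real.exp (-((n:ℝ) * a * t)) : ℝ) : ℂ) * φ t = 0 := by
    intro n
    induction n with
    | zero => intro k; simpa using hmom k
    | succ n ih =>
      intro k
      have hψmeas : Measurable (fun t : ℝ => ((Real.exp (-((n:ℝ) * a * t)) : ℝ) : ℂ) * φ t) := by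
        fun_prop
      have hbpos : (0:ℝ) < c + (n:ℝ) * a := by positivity
      have hψbound : ∀ t : ℝ, 0 < t →
          ‖(((Real.exp (-((n:ℝ) * a * t)) : ℝ) : ℂ) * φ t)‖
            ≤ C * Real.exp (-(c + (n:ℝ) * a) * t) := by
        intro t ht
        rw [norm_mul, Complex.norm_real, Real.norm_eq_abs, abs_of_nonneg (Real.exp_nonneg _)]
        calc Real.exp (-((n:ℝ) * a * t)) * ‖φ t‖
            ≤ Real.exp (-((n:ℝ) * a * t)) * (C * Real.exp (-c * t)) :=
              mul_le_mul_of_nonneg_left (hbound t ht) (Real.exp_nonneg _)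
          _ = C * Real.exp (-(c + (n:ℝ) * a) * t) := by
              rw [mul_comm, mul_assoc, ← Real.exp_add]
              ring_nf
      have hψmom : ∀ k : ℕ, ∫ t in Set.Ioi (0:ℝ),
          (t:ℂ) ^ k * (((Real.exp (-((n:ℝ) * a * t)) : ℝ) : ℂ) * φ t) = 0 := by
        intro k
        rw [← ih k]
        refine setIntegral_congr_fun measurableSet_Ioi (fun t ht => ?_)
        ring
      have hs := swap_lemma _ hψmeas hC hbpos hψbound ha.le
        (by nlinarith [mul_nonneg (Nat.cast_nonneg n : (0:ℝ) ≤ n) ha.le]) hψmom k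
      rw [← hs]
      refine setIntegral_congr_fun measurableSet_Ioi (fun t ht => ?_)
      have e1 : Real.exp (-(((n:ℝ)+1) * a * t)) =
          Real.exp (-(a * t)) * Real.exp (-((n:ℝ) * a * t)) := by
        rw [← Real.exp_add]; congr 1; ring
      push_cast [e1]
      ring
  -- Step 2: Laplace transform vanishes at points n * a
  have laplace : ∀ n : ℕ, ∫ t in Set.Ioi (0:ℝ),
      ((Real.exp (-(a * t)) ^ n : ℝ) : ℂ) * φ t = 0 := by
    intro n
    have h0 := key n 0
    simp only [pow_zero, one_mul] at h0
    rw [← h0]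
    refine setIntegral_congr_fun measurableSet_Ioi (fun t ht => ?_)
    rw [← Real.exp_nat_mul]
    congr 3
    ring
  -- Integrability of φ
  have hφint : IntegrableOn φ (Set.Ioi 0) := by
    apply Integrable.mono' (((aux_int 0 hc).const_mul C))
      hmeas.aestronglyMeasurable.restrict
    rw [ae_restrict_iff' measurableSet_Ioi]
    refine Filter.Eventually.of_forall (fun t ht => ?_)
    simpa using hbound t ht
  have hφint' : Integrable φ := by
    have e : Set.indicator (Set.Ioi 0) φ = φ := by
      funext t
      by_cases ht : t ∈ Set.Ioi (0:ℝ)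
      · simp [ht]
      · simp [ht, hsupp t (le_of_not_gt ht)]
    rw [← e]
    exact (integrable_indicator_iff measurableSet_Ioi).2 hφint
  -- The compactification map
  set e : ℝ → Set.Icc (0:ℝ) 1 :=
    fun t => Set.projIcc 0 1 zero_le_one (Real.exp (-(a * t))) with hedef
  have hecont : Continuous e := continuous_projIcc.comp (by fun_prop)
  have hmem : ∀ t : ℝ, 0 < t → Real.exp (-(a * t)) ∈ Set.Icc (0:ℝ) 1 := by
    intro t ht
    refine ⟨(Real.exp_pos _).le, ?_⟩
    rw [Real.exp_le_one_iff]
    nlinarith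
  have heval : ∀ t : ℝ, 0 < t → ((e t : ℝ)) = Real.exp (-(a * t)) := by
    intro t ht
    simp only [hedef]
    rw [Set.projIcc_of_mem _ (hmem t ht)]
  -- The functional Λ
  have hΛint : ∀ f : C(Set.Icc (0:ℝ) 1, ℝ),
      IntegrableOn (fun t => ((f (e t) : ℝ) : ℂ) * φ t) (Set.Ioi 0) := by
    intro f
    apply Integrable.bdd_mul (c := ‖f‖) hφint
      (Complex.continuous_ofReal.comp (f.continuous.comp hecont)).aestronglyMeasurable.restrict
    refine Filter.Eventually.of_forall (fun t => ?_)
    simpa using f.norm_coe_le_norm (e t)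
  set Λ : C(Set.Icc (0:ℝ) 1, ℝ) → ℂ :=
    fun f => ∫ t in Set.Ioi (0:ℝ), ((f (e t) : ℝ) : ℂ) * φ t with hΛdef
  have hΛcont : Continuous Λ := by
    apply (LipschitzWith.of_dist_le_mul
      (K := Real.toNNReal (∫ t in Set.Ioi (0:ℝ), ‖φ t‖)) ?_).continuous
    intro f g
    rw [dist_eq_norm]
    have e1 : Λ f - Λ g = ∫ t in Set.Ioi (0:ℝ),
        (((f (e t) : ℝ) : ℂ) - ((g (e t) : ℝ) : ℂ)) * φ t := by
      simp only [hΛdef]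
      rw [← integral_sub (hΛint f) (hΛint g)]
      refine setIntegral_congr_fun measurableSet_Ioi (fun t ht => ?_)
      ring
    rw [e1]
    calc ‖∫ t in Set.Ioi (0:ℝ), (((f (e t) : ℝ) : ℂ) - ((g (e t) : ℝ) : ℂ)) * φ t‖
        ≤ ∫ t in Set.Ioi (0:ℝ), ‖(((f (e t) : ℝ) : ℂ) - ((g (e t) : ℝ) : ℂ)) * φ t‖ :=
          norm_integral_le_integral_norm _
      _ ≤ ∫ t in Set.Ioi (0:ℝ), dist f g * ‖φ t‖ := by
          apply integral_mono_of_nonneg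
            (Filter.Eventually.of_forall fun t => norm_nonneg _)
            (hφint.norm.const_mul _)
          refine Filter.Eventually.of_forall (fun t => ?_)
          show ‖(((f (e t) : ℝ) : ℂ) - ((g (e t) : ℝ) : ℂ)) * φ t‖ ≤ dist f g * ‖φ t‖
          rw [norm_mul]
          apply mul_le_mul_of_nonneg_right _ (norm_nonneg _)
          rw [← Complex.ofReal_sub]
          rw [Complex.norm_real, ← dist_eq_norm]
          exact ContinuousMap.dist_apply_le_dist _
      _ = dist f g * ∫ t in Set.Ioi (0:ℝ), ‖φ t‖ := integral_const_mul _ _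
      _ ≤ Real.toNNReal (∫ t in Set.Ioi (0:ℝ), ‖φ t‖) * dist f g := by
          rw [Real.coe_toNNReal _ (integral_nonneg fun t => norm_nonneg _)]
          rw [mul_comm]
  -- Λ vanishes on polynomials
  have hterm_int : ∀ i : ℕ,
      IntegrableOn (fun t => (((e t : ℝ) : ℂ)) ^ i * φ t) (Set.Ioi 0) := by
    intro i
    apply Integrable.bdd_mul (c := 1) hφint
      ((Continuous.aestronglyMeasurable (by
        exact (Complex.continuous_ofReal.comp (continuous_subtype_val.comp hecont)).pow i :
        Continuous (fun t : ℝ => (((e t : ℝ) : ℂ)) ^ i))).restrict)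
    refine Filter.Eventually.of_forall (fun t => ?_)
    rw [norm_pow, Complex.norm_real]
    calc |((e t : ℝ))| ^ i ≤ 1 ^ i := by
          apply pow_le_pow_left₀ (abs_nonneg _)
          rw [abs_le]
          exact ⟨by linarith [(e t).2.1], (e t).2.2⟩
      _ = 1 := one_pow i
  have hpoly : ∀ f ∈ polynomialFunctions (Set.Icc (0:ℝ) 1), Λ f = 0 := by
    intro f hf
    have hf' : f ∈ (polynomialFunctions (Set.Icc (0:ℝ) 1) : Set _) := hf
    rw [polynomialFunctions_coe] at hf'
    obtain ⟨p, rfl⟩ := hf'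
    have e4 : ∀ t ∈ Set.Ioi (0:ℝ),
        ((Polynomial.toContinuousMapOnAlgHom (Set.Icc (0:ℝ) 1) p (e t) : ℝ) : ℂ) * φ t =
        ∑ i ∈ Finset.range (p.natDegree + 1),
          (p.coeff i : ℂ) * ((((e t : ℝ)) : ℂ) ^ i * φ t) := by
      intro t ht
      rw [Polynomial.toContinuousMapOnAlgHom_apply, Polynomial.toContinuousMapOn_apply,
        Polynomial.toContinuousMap_apply, Polynomial.eval_eq_sum_range]
      push_cast
      rw [Finset.sum_mul]
      refine Finset.sum_congr rfl (fun i _ => ?_)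
      ring
    simp only [hΛdef]
    rw [setIntegral_congr_fun measurableSet_Ioi e4,
      integral_finset_sum _ (fun i _ => (hterm_int i).const_mul _)]
    apply Finset.sum_eq_zero
    intro i _
    rw [integral_const_mul]
    have e5 : ∫ t in Set.Ioi (0:ℝ), (((e t : ℝ)) : ℂ) ^ i * φ t = 0 := by
      rw [← laplace i]
      refine setIntegral_congr_fun measurableSet_Ioi (fun t ht => ?_)
      rw [heval t ht]
      push_cast
      ring
    rw [e5, mul_zero]
  -- Λ vanishes on all continuous functions
  have hK : ∀ f : C(Set.Icc (0:ℝ) 1, ℝ), Λ f = 0 := by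
    intro f
    have hfmem : f ∈ (polynomialFunctions (Set.Icc (0:ℝ) 1)).topologicalClosure := by
      rw [polynomialFunctions_closure_eq_top]
      trivial
    have hsub : ((polynomialFunctions (Set.Icc (0:ℝ) 1)).topologicalClosure : Set _)
        ⊆ {g : C(Set.Icc (0:ℝ) 1, ℝ) | Λ g = 0} := by
      rw [Subalgebra.topologicalClosure_coe]
      exact closure_minimal hpoly (isClosed_eq hΛcont continuous_const)
    exact hsub hfmem
  -- Conclude via smooth compactly supported test functions
  apply ae_eq_zero_of_integral_contDiff_smul_eq_zero hφint'.locallyIntegrable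
  intro g hg hgsupp
  obtain ⟨M, hM⟩ : ∃ M : ℝ, ∀ y : ℝ, M < |y| → g y = 0 := by
    obtain ⟨M, hM⟩ := hgsupp.isCompact.isBounded.subset_closedBall 0
    refine ⟨M, fun y hy => ?_⟩
    apply image_eq_zero_of_notMem_tsupport
    intro hmem'
    have := hM hmem'
    rw [Metric.mem_closedBall, Real.dist_eq, sub_zero] at this
    linarith
  set Fg : ℝ → ℝ := fun x => if 0 < x then g (-Real.log x / a) else 0 with hFgdef
  have hFgcont : Continuous Fg := by
    rw [continuous_iff_continuousAt]
    intro x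
    rcases lt_trichotomy x 0 with hx | hx | hx
    · refine Filter.EventuallyEq.continuousAt (y := 0) ?_
      filter_upwards [Iio_mem_nhds hx] with y hy
      simp [hFgdef, not_lt.2 (le_of_lt (mem_Iio.mp hy))]
    · subst hx
      refine Filter.EventuallyEq.continuousAt (y := 0) ?_
      have hε : (0:ℝ) < Real.exp (-(a * (max M 0 + 1))) := Real.exp_pos _
      filter_upwards [Metric.ball_mem_nhds 0 hε] with y hy
      rw [Metric.mem_ball, Real.dist_eq, sub_zero] at hy
      by_cases hy0 : 0 < y
      · have hylt : y < Real.exp (-(a * (max M 0 + 1))) := lt_of_abs_lt hy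
        have hlog : Real.log y < -(a * (max M 0 + 1)) := by
          calc Real.log y < Real.log (Real.exp (-(a * (max M 0 + 1)))) :=
                Real.log_lt_log hy0 hylt
            _ = -(a * (max M 0 + 1)) := Real.log_exp _
        have hgt : max M 0 + 1 < -Real.log y / a := by
          rw [lt_div_iff₀ ha]
          nlinarith
        have : M < |(-Real.log y / a)| := by
          calc M ≤ max M 0 := le_max_left _ _
            _ < max M 0 + 1 := by linarith
            _ < -Real.log y / a := hgt
            _ ≤ |(-Real.log y / a)| := le_abs_self _
        simp [hFgdef, hy0, hM _ this]
      · simp [hFgdef, hy0]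
    · have hev : Fg =ᶠ[nhds x] fun y => g (-Real.log y / a) := by
        filter_upwards [Ioi_mem_nhds hx] with y hy
        simp [hFgdef, mem_Ioi.mp hy]
      refine ContinuousAt.congr ?_ hev.symm
      exact (hg.continuous.continuousAt).comp
        (((Real.continuousAt_log hx.ne').neg).div_const a)
  set fg : C(Set.Icc (0:ℝ) 1, ℝ) :=
    ⟨fun x => Fg (x : ℝ), hFgcont.comp continuous_subtype_val⟩ with hfgdef
  have hval : ∀ t ∈ Set.Ioi (0:ℝ), ((fg (e t) : ℝ) : ℂ) * φ t = (g t : ℂ) * φ t := by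
    intro t ht
    have ht0 : (0:ℝ) < t := ht
    have : fg (e t) = g t := by
      simp only [hfgdef, ContinuousMap.coe_mk]
      rw [heval t ht0]
      simp only [hFgdef, Real.exp_pos, if_true]
      rw [Real.log_exp]
      congr 1
      field_simp
    rw [this]
  have hΛfg : ∫ t in Set.Ioi (0:ℝ), (g t : ℂ) * φ t = 0 := by
    rw [← setIntegral_congr_fun measurableSet_Ioi hval]
    exact hK fg
  have hsmul : ∫ x : ℝ, g x • φ x = ∫ t in Set.Ioi (0:ℝ), (g t : ℂ) * φ t := by
    rw [← setIntegral_eq_integral_of_forall_compl_eq_zero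
      (s := Set.Ioi (0:ℝ)) (f := fun x => g x • φ x)
      (fun x hx => by
        have hx0 : φ x = 0 := hsupp x (le_of_not_gt (fun h' => hx h'))
        simp [hx0])]
    refine setIntegral_congr_fun measurableSet_Ioi (fun t ht => ?_)
    rw [Complex.real_smul]
  rw [hsmul, hΛfg]
end

section
/- For every t > 0 and every real λ > 0, (1/(4√π · t^{3/2})) ∫₀^∞ e^{-u/(4t)} · sin(√(uλ))/√λ du = e^{-tλ}. -/
open MeasureTheory Real Complex Filter


/-- Real part computation for the quadratic exponent. -/
lemma aux_re (a r x : ℝ) : (-(a : ℂ) * x ^ 2 + Complex.I * r * x).re = -a * x ^ 2 := by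
  have h : -(a : ℂ) * x ^ 2 + Complex.I * r * x
      = Complex.ofReal (-a * x ^ 2) + Complex.ofReal (r * x) * Complex.I := by
    push_cast; ring
  rw [h]
  simp only [Complex.add_re, Complex.mul_re, Complex.ofReal_re, Complex.ofReal_im,
    Complex.I_re, Complex.I_im]
  ring

/-- Integrability of `x ↦ x · exp(-a x² + i r x)` for `a > 0`. -/
lemma aux_integrable_mul (a r : ℝ) (ha : 0 < a) :
    Integrable (fun x : ℝ ↦ (x : ℂ) * Complex.exp (-(a : ℂ) * x ^ 2 + Complex.I * r * x)) := by
  have hmeas : AEStronglyMeasurable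
      (fun x : ℝ ↦ (x : ℂ) * Complex.exp (-(a : ℂ) * x ^ 2 + Complex.I * r * x)) volume := by
    apply Continuous.aestronglyMeasurable
    fun_prop
  have hbound := (integrable_mul_exp_neg_mul_sq ha).abs
  refine hbound.mono' hmeas (Filter.Eventually.of_forall fun x ↦ ?_)
  simp only [norm_mul, Complex.norm_exp, aux_re, Complex.norm_real,
    Real.norm_eq_abs, abs_mul, abs_of_pos (Real.exp_pos _)]
  exact le_refl _

/-- Integrability of `x ↦ exp(-a x² + i r x)` for `a > 0`. -/
lemma aux_integrable (a r : ℝ) (ha : 0 < a) :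
    Integrable (fun x : ℝ ↦ Complex.exp (-(a : ℂ) * x ^ 2 + Complex.I * r * x)) := by
  have := integrable_cexp_quadratic' (b := -(a : ℂ)) (by simpa using ha) (Complex.I * r) 0
  simpa using this

set_option maxHeartbeats 1000000 in
/-- The key Gaussian-type integral: `∫ℝ x e^{-ax²} sin(rx) dx`. -/
lemma aux_integral_sin (a r : ℝ) (ha : 0 < a) :
    ∫ x : ℝ, x * Real.exp (-a * x ^ 2) * Real.sin (r * x)
      = r / (2 * a) * Real.sqrt (π / a) * Real.exp (-r ^ 2 / (4 * a)) := by
  have ha' : (-(a : ℂ)).re < 0 := by simpa using ha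
  have haC : (a : ℂ) ≠ 0 := by exact_mod_cast ha.ne'
  set c : ℂ := Complex.I * r / (2 * a) with hc
  -- derivative computation
  have hderiv : ∀ x : ℝ,
      HasDerivAt (fun y : ℝ ↦ (-(2 * (a : ℂ)))⁻¹ * Complex.exp (-(a : ℂ) * y ^ 2 + Complex.I * r * y))
        (((x : ℂ) - c) * Complex.exp (-(a : ℂ) * x ^ 2 + Complex.I * r * x)) x := by
    intro x
    have h1 : HasDerivAt (fun z : ℂ ↦ -(a : ℂ) * z ^ 2 + Complex.I * r * z)
        (-(a : ℂ) * (2 * x) + Complex.I * r) x := by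
      have := ((hasDerivAt_pow 2 (x : ℂ)).const_mul (-(a : ℂ))).add
        ((hasDerivAt_id (x : ℂ)).const_mul (Complex.I * r))
      simpa [mul_comm, Pi.add_def] using this
    have h2 := ((h1.cexp.const_mul ((-(2 * (a : ℂ)))⁻¹)).comp_ofReal)
    convert h2 using 1
    have key : (-(2 * (a : ℂ)))⁻¹ * (-(a : ℂ) * (2 * x) + Complex.I * r)
        = (x : ℂ) - c := by
      rw [hc]
      field_simp
      ring
    rw [show ((-(2 * (a : ℂ)))⁻¹ *
          (Complex.exp (-(a : ℂ) * x ^ 2 + Complex.I * r * x) * (-(a : ℂ) * (2 * x) + Complex.I * r)))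
        = ((-(2 * (a : ℂ)))⁻¹ * (-(a : ℂ) * (2 * x) + Complex.I * r)) *
          Complex.exp (-(a : ℂ) * x ^ 2 + Complex.I * r * x) from by ring,
      key]
  -- integrability of the derivative
  have hint1 := aux_integrable_mul a r ha
  have hint2 := aux_integrable a r ha
  have hintd : Integrable (fun x : ℝ ↦
      ((x : ℂ) - c) * Complex.exp (-(a : ℂ) * x ^ 2 + Complex.I * r * x)) := by
    have := hint1.sub (hint2.const_mul c)
    simpa [sub_mul, Pi.sub_def] using this
  -- limits at ±∞
  have hnorm : ∀ x : ℝ, ‖(-(2 * (a : ℂ)))⁻¹ * Complex.exp (-(a : ℂ) * x ^ 2 + Complex.I * r * x)‖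
      = (2 * a)⁻¹ * Real.exp (-a * x ^ 2) := by
    intro x
    simp only [norm_mul, Complex.norm_exp, aux_re]
    congr 1
    rw [norm_inv, norm_neg, norm_mul]
    simp [Complex.norm_real, abs_of_pos ha]
  have hexp_tendsto : Tendsto (fun x : ℝ ↦ (2 * a)⁻¹ * Real.exp (-a * x ^ 2))
      (atTop ⊔ atBot) (nhds 0) := by
    have hsq : Tendsto (fun x : ℝ ↦ x ^ 2) (atTop ⊔ atBot) atTop := by
      rw [tendsto_sup]
      constructor
      · exact tendsto_pow_atTop two_ne_zero
      · have hneg : Tendsto (fun x : ℝ ↦ -x) atBot atTop := tendsto_neg_atBot_atTop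
        have := (tendsto_pow_atTop (n := 2) two_ne_zero).comp hneg
        simpa [Function.comp_def, neg_sq] using this
    have h2 : Tendsto (fun x : ℝ ↦ -a * x ^ 2) (atTop ⊔ atBot) atBot :=
      hsq.const_mul_atTop_of_neg (neg_lt_zero.2 ha)
    have h3 := Real.tendsto_exp_atBot.comp h2
    have h4 := h3.const_mul ((2 * a)⁻¹)
    rw [mul_zero] at h4
    simpa [Function.comp_def] using h4
  have htends : ∀ l, l ≤ (atTop ⊔ atBot : Filter ℝ) → Tendsto
      (fun x : ℝ ↦ (-(2 * (a : ℂ)))⁻¹ * Complex.exp (-(a : ℂ) * x ^ 2 + Complex.I * r * x))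
      l (nhds 0) := by
    intro l hl
    rw [tendsto_zero_iff_norm_tendsto_zero]
    simp_rw [hnorm]
    exact hexp_tendsto.mono_left hl
  have hzero : ∫ x : ℝ, ((x : ℂ) - c) * Complex.exp (-(a : ℂ) * x ^ 2 + Complex.I * r * x) = 0 := by
    have := MeasureTheory.integral_of_hasDerivAt_of_tendsto hderiv hintd
      (htends atBot le_sup_right) (htends atTop le_sup_left)
    simpa using this
  -- value of the Gaussian integral
  have hgauss : ∫ x : ℝ, Complex.exp (-(a : ℂ) * x ^ 2 + Complex.I * r * x)
      = ((Real.sqrt (π / a) : ℝ) : ℂ) * Complex.exp (-((r : ℂ) ^ 2) / (4 * a)) := by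
    have := integral_cexp_quadratic (b := -(a : ℂ)) ha' (Complex.I * r) 0
    simp only [add_zero, zero_sub, neg_neg] at this
    rw [this]
    congr 1
    · rw [Real.sqrt_eq_rpow, Complex.ofReal_cpow (by positivity) (1 / 2)]
      push_cast
      norm_num
    · congr 1
      have h2 : (Complex.I * r) ^ 2 = -((r : ℂ) ^ 2) := by
        rw [mul_pow, Complex.I_sq]
        ring
      rw [h2]
      field_simp
  have hmain : ∫ x : ℝ, (x : ℂ) * Complex.exp (-(a : ℂ) * x ^ 2 + Complex.I * r * x)
      = c * (((Real.sqrt (π / a) : ℝ) : ℂ) * Complex.exp (-((r : ℂ) ^ 2) / (4 * a))) := by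
    have hsub := MeasureTheory.integral_sub hint1 (hint2.const_mul c)
    have : (∫ x : ℝ, (x : ℂ) * Complex.exp (-(a : ℂ) * x ^ 2 + Complex.I * r * x))
        - c * ∫ x : ℝ, Complex.exp (-(a : ℂ) * x ^ 2 + Complex.I * r * x) = 0 := by
      rw [← MeasureTheory.integral_const_mul, ← hsub]
      rw [← hzero]
      congr 1
      ext x
      ring
    rw [sub_eq_zero] at this
    rw [this, hgauss]
  -- take imaginary parts
  have him : ∀ x : ℝ, ((x : ℂ) * Complex.exp (-(a : ℂ) * x ^ 2 + Complex.I * r * x)).im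
      = x * Real.exp (-a * x ^ 2) * Real.sin (r * x) := by
    intro x
    have : -(a : ℂ) * x ^ 2 + Complex.I * r * x
        = ((-a * x ^ 2 : ℝ) : ℂ) + ((r * x : ℝ) : ℂ) * Complex.I := by
      push_cast; ring
    have h2 : (x : ℂ) * Complex.exp (-(a : ℂ) * x ^ 2 + Complex.I * r * x)
        = Complex.ofReal (x * Real.exp (-a * x ^ 2) * Real.cos (r * x))
          + Complex.ofReal (x * Real.exp (-a * x ^ 2) * Real.sin (r * x)) * Complex.I := by
      rw [this, Complex.exp_add, Complex.exp_mul_I, ← Complex.ofReal_exp,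
        ← Complex.ofReal_cos, ← Complex.ofReal_sin]
      push_cast
      ring
    rw [h2]
    simp only [Complex.add_im, Complex.mul_im, Complex.ofReal_re, Complex.ofReal_im,
      Complex.I_re, Complex.I_im]
    ring
  have hLHS : ∫ x : ℝ, x * Real.exp (-a * x ^ 2) * Real.sin (r * x)
      = (∫ x : ℝ, (x : ℂ) * Complex.exp (-(a : ℂ) * x ^ 2 + Complex.I * r * x)).im := by
    have h' : ∫ x : ℝ, ((x : ℂ) * Complex.exp (-(a : ℂ) * x ^ 2 + Complex.I * r * x)).im
        = (∫ x : ℝ, (x : ℂ) * Complex.exp (-(a : ℂ) * x ^ 2 + Complex.I * r * x)).im :=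
      integral_im (𝕜 := ℂ) hint1
    rw [← h']
    congr 1
    ext x
    rw [him]
  rw [hLHS, hmain]
  have hcexp : Complex.exp (-((r : ℂ) ^ 2) / (4 * a))
      = ((Real.exp (-r ^ 2 / (4 * a)) : ℝ) : ℂ) := by
    rw [show (-((r : ℂ) ^ 2) / (4 * (a : ℂ))) = ((-r ^ 2 / (4 * a) : ℝ) : ℂ) from by
      push_cast; ring, Complex.ofReal_exp]
  rw [hcexp, hc]
  have : Complex.I * r / (2 * a) * (((Real.sqrt (π / a) : ℝ) : ℂ)
      * ((Real.exp (-r ^ 2 / (4 * a)) : ℝ) : ℂ))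
      = ((r / (2 * a) * Real.sqrt (π / a) * Real.exp (-r ^ 2 / (4 * a)) : ℝ) : ℂ) * Complex.I := by
    push_cast
    ring
  rw [this]
  simp only [Complex.mul_im, Complex.ofReal_re, Complex.ofReal_im, Complex.I_re, Complex.I_im]
  ring

/-- Scalar subordination identity: for `t > 0` and `λ > 0`,
`(1/(4√π t^{3/2})) ∫₀^∞ e^{-u/(4t)} sin(√(uλ))/√λ du = e^{-tλ}`. -/
theorem statement6 (t lam : ℝ) (ht : 0 < t) (hlam : 0 < lam) :
    (1 / (4 * Real.sqrt π * t ^ (3 / 2 : ℝ))) *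
      ∫ u in Set.Ioi (0 : ℝ),
        Real.exp (-u / (4 * t)) * (Real.sin (Real.sqrt (u * lam)) / Real.sqrt lam) =
    Real.exp (-t * lam) := by
  set a : ℝ := 1 / (4 * t) with ha_def
  have ha : 0 < a := by positivity
  set r : ℝ := Real.sqrt lam with hr_def
  have hr : 0 < r := Real.sqrt_pos.mpr hlam
  -- the inner function
  set g : ℝ → ℝ := fun u ↦ Real.exp (-u / (4 * t)) * Real.sin (Real.sqrt (u * lam)) with hg
  -- step 1: substitution u = x²
  have hsub : ∫ u in Set.Ioi (0 : ℝ), g u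
      = ∫ x in Set.Ioi (0 : ℝ), 2 * (x * Real.exp (-a * x ^ 2) * Real.sin (r * x)) := by
    rw [← integral_comp_rpow_Ioi g (p := (2 : ℝ)) two_ne_zero]
    refine setIntegral_congr_fun measurableSet_Ioi fun x hx ↦ ?_
    have hx0 : 0 < x := hx
    have hx2 : x ^ ((2 : ℝ)) = x ^ 2 := by
      rw [← Real.rpow_natCast x 2]; norm_num
    have hx1 : x ^ ((2 : ℝ) - 1) = x := by
      norm_num
    have hsqrt : Real.sqrt (x ^ 2 * lam) = r * x := by
      rw [Real.sqrt_mul (sq_nonneg x), Real.sqrt_sq hx0.le, hr_def]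
      ring
    have hexp : -(x ^ 2) / (4 * t) = -a * x ^ 2 := by
      rw [ha_def]; field_simp
    simp only [smul_eq_mul, hg, hx2, hx1, hsqrt, hexp]
    rw [show |(2 : ℝ)| = 2 from abs_of_pos two_pos]
    ring
  -- step 2: evenness
  have heven : ∫ x : ℝ, x * Real.exp (-a * x ^ 2) * Real.sin (r * x)
      = 2 * ∫ x in Set.Ioi (0 : ℝ), x * Real.exp (-a * x ^ 2) * Real.sin (r * x) := by
    rw [← integral_comp_abs (f := fun x ↦ x * Real.exp (-a * x ^ 2) * Real.sin (r * x))]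
    congr 1
    ext x
    rcases abs_cases x with ⟨h1, _⟩ | ⟨h1, _⟩ <;> rw [h1] <;> simp [Real.sin_neg]
  -- step 3: conclude
  have hval := aux_integral_sin a r ha
  have hIoi : ∫ x in Set.Ioi (0 : ℝ), 2 * (x * Real.exp (-a * x ^ 2) * Real.sin (r * x))
      = r / (2 * a) * Real.sqrt (π / a) * Real.exp (-r ^ 2 / (4 * a)) := by
    rw [MeasureTheory.integral_const_mul, ← heven, hval]
  have hg_eq : (∫ u in Set.Ioi (0 : ℝ),
      Real.exp (-u / (4 * t)) * (Real.sin (Real.sqrt (u * lam)) / r))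
      = (∫ u in Set.Ioi (0 : ℝ), g u) / r := by
    rw [← MeasureTheory.integral_div]
    congr 1
    ext u
    rw [hg]
    ring
  rw [hg_eq, hsub, hIoi]
  -- arithmetic
  have hr2 : r ^ 2 = lam := Real.sq_sqrt hlam.le
  have h4a : 4 * a = 1 / t := by rw [ha_def]; field_simp
  have hexp_eq : Real.exp (-r ^ 2 / (4 * a)) = Real.exp (-t * lam) := by
    rw [hr2, h4a]
    congr 1
    field_simp
  have hsqrt_pi_a : Real.sqrt (π / a) = 2 * Real.sqrt π * Real.sqrt t := by
    rw [ha_def]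
    rw [show π / (1 / (4 * t)) = 4 * t * π from by field_simp]
    rw [show (4 : ℝ) * t * π = (2 * Real.sqrt t * Real.sqrt π) ^ 2 from by
      rw [mul_pow, mul_pow, Real.sq_sqrt ht.le, Real.sq_sqrt Real.pi_pos.le]; ring]
    rw [Real.sqrt_sq (by positivity)]
    ring
  have ht32 : t ^ (3 / 2 : ℝ) = t * Real.sqrt t := by
    rw [show (3 / 2 : ℝ) = 1 + 1 / 2 from by norm_num, Real.rpow_add ht,
      Real.rpow_one, ← Real.sqrt_eq_rpow]
  rw [hexp_eq, hsqrt_pi_a, ht32, ha_def]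
  have hπ : 0 < Real.sqrt π := Real.sqrt_pos.mpr Real.pi_pos
  have hst : 0 < Real.sqrt t := Real.sqrt_pos.mpr ht
  field_simp
end

section
/- Let λ : ℕ → ℝ satisfy λ_k ≥ 0 for all k, let t > 0, and let x be an element of ℓ² (square-summable complex sequences). Then the function s ↦ e^{-s²/(4t)} · (k ↦ cos(s·√(λ_k)) x_k) is Bochner integrable on ℝ with values in ℓ², and (4πt)^{-1/2} ∫_{-∞}^{∞} e^{-s²/(4t)} (k ↦ cos(s·√(λ_k)) x_k) ds = (k ↦ e^{-t·λ_k} x_k) in ℓ². -/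
open MeasureTheory Real


noncomputable section KannaiAux

lemma gaussCos {a : ℝ} (ha : 0 < a) (b : ℝ) :
    ∫ s : ℝ, Real.exp (-(a * s ^ 2)) * Real.cos (b * s)
      = Real.sqrt (π / a) * Real.exp (-(b ^ 2 / (4 * a))) := by
  have hb : (0:ℝ) < ((a : ℂ)).re := by simpa using ha
  have hF := fourierIntegral_gaussian (b := (a : ℂ)) hb (b : ℂ)
  have hint : Integrable (fun s : ℝ =>
      Complex.exp (Complex.I * (b : ℂ) * (s : ℂ)) * Complex.exp (-(a : ℂ) * (s : ℂ) ^ 2)) := by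
    have h := integrable_cexp_quadratic (b := (a : ℂ)) hb (Complex.I * (b : ℂ)) 0
    apply h.congr
    filter_upwards with s
    rw [← Complex.exp_add]
    congr 1
    ring
  have hre := integral_re hint
  rw [hF] at hre
  have h1 : ∀ s : ℝ, (Complex.exp (Complex.I * (b : ℂ) * (s : ℂ)) *
      Complex.exp (-(a : ℂ) * (s : ℂ) ^ 2)).re
      = Real.exp (-(a * s ^ 2)) * Real.cos (b * s) := by
    intro s
    have e1 : (Complex.I * (b : ℂ) * (s : ℂ)) = ((b * s : ℝ) : ℂ) * Complex.I := by
      push_cast; ring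
    have e2 : (-(a : ℂ) * (s : ℂ) ^ 2) = ((-(a * s ^ 2) : ℝ) : ℂ) := by push_cast; ring
    rw [e1, e2, ← Complex.ofReal_exp, mul_comm, Complex.re_ofReal_mul,
      Complex.exp_ofReal_mul_I_re]
  have h2 : ((π / (a : ℂ)) ^ (1 / 2 : ℂ) * Complex.exp (-(b : ℂ) ^ 2 / (4 * (a : ℂ)))).re
      = Real.sqrt (π / a) * Real.exp (-(b ^ 2 / (4 * a))) := by
    have e3 : (π / (a : ℂ)) = ((π / a : ℝ) : ℂ) := by push_cast; ring
    have e4 : (-(b : ℂ) ^ 2 / (4 * (a : ℂ))) = ((-(b ^ 2 / (4 * a)) : ℝ) : ℂ) := by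
      push_cast; ring
    have e5 : ((π / a : ℝ) : ℂ) ^ (1 / 2 : ℂ) = ((Real.sqrt (π / a) : ℝ) : ℂ) := by
      rw [Real.sqrt_eq_rpow, Complex.ofReal_cpow (by positivity)]
      norm_num
    rw [e3, e4, e5, ← Complex.ofReal_exp, ← Complex.ofReal_mul, Complex.ofReal_re]
  have h3 : ∫ s : ℝ, Real.exp (-(a * s ^ 2)) * Real.cos (b * s)
      = ∫ s : ℝ, (Complex.exp (Complex.I * (b : ℂ) * (s : ℂ)) *
        Complex.exp (-(a : ℂ) * (s : ℂ) ^ 2)).re :=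
    integral_congr_ae (Filter.Eventually.of_forall fun s => (h1 s).symm)
  rw [h3, ← h2]
  exact hre

end KannaiAux

noncomputable section KannaiAux2
open scoped ENNReal

lemma keyIntegral {t : ℝ} (ht : 0 < t) (b : ℝ) :
    ∫ s : ℝ, Real.exp (-s ^ 2 / (4 * t)) * Real.cos (s * b)
      = Real.sqrt (4 * π * t) * Real.exp (-t * b ^ 2) := by
  have ha : (0:ℝ) < 1 / (4 * t) := by positivity
  have h := gaussCos ha b
  have e1 : (fun s : ℝ => Real.exp (-s ^ 2 / (4 * t)) * Real.cos (s * b))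
      = fun s : ℝ => Real.exp (-(1 / (4 * t) * s ^ 2)) * Real.cos (b * s) := by
    funext s
    rw [mul_comm s b, show -s ^ 2 / (4 * t) = -(1 / (4 * t) * s ^ 2) by ring]
  rw [e1, h, show π / (1 / (4 * t)) = 4 * π * t by field_simp,
    show b ^ 2 / (4 * (1 / (4 * t))) = t * b ^ 2 by field_simp]
  ring_nf

lemma keyIntegrable {t : ℝ} (ht : 0 < t) :
    Integrable (fun s : ℝ => Real.exp (-s ^ 2 / (4 * t))) := by
  have ha : (0:ℝ) < 1 / (4 * t) := by positivity
  have := integrable_exp_neg_mul_sq ha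
  refine this.congr (Filter.Eventually.of_forall fun s => ?_)
  show Real.exp _ = Real.exp _
  congr 1
  ring

/-- coordinate evaluation as a continuous linear map on ℓ². -/
def evCLM (k : ℕ) : lp (fun _ : ℕ => ℂ) 2 →L[ℂ] ℂ :=
  LinearMap.mkContinuous
    { toFun := fun f => f k
      map_add' := fun f g => by simp [lp.coeFn_add]
      map_smul' := fun c f => by simp [lp.coeFn_smul] }
    1 (fun f => by show ‖f k‖ ≤ 1 * ‖f‖; simpa using lp.norm_apply_le_norm two_ne_zero f k)

lemma lp2_norm_le (f g : lp (fun _ : ℕ => ℂ) 2) (h : ∀ k, ‖f k‖ ≤ ‖g k‖) : ‖f‖ ≤ ‖g‖ := by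
  have hp : 0 < (2 : ℝ≥0∞).toReal := by norm_num
  rw [lp.norm_eq_tsum_rpow hp, lp.norm_eq_tsum_rpow hp]
  refine Real.rpow_le_rpow (tsum_nonneg fun k => by positivity) ?_ (by positivity)
  refine Summable.tsum_le_tsum (fun k => Real.rpow_le_rpow (norm_nonneg _) (h k) hp.le) ?_ ?_
  · exact (lp.memℓp f).summable hp
  · exact (lp.memℓp g).summable hp

end KannaiAux2


/-- Spectral (multiplier) form of the Kannai transmutation formula: if `λ_k ≥ 0`,
`t > 0`, `x ∈ ℓ²`, and `y s` is the ℓ² sequence `k ↦ e^{-s²/(4t)} cos(s√(λ_k)) x_k`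
while `z` is the ℓ² sequence `k ↦ e^{-tλ_k} x_k`, then `y` is Bochner integrable on `ℝ`
and `(4πt)^{-1/2} ∫_{-∞}^∞ y s ds = z`. -/
theorem statement7 (lam : ℕ → ℝ) (hlam : ∀ k, 0 ≤ lam k)
    (t : ℝ) (ht : 0 < t)
    (x : lp (fun _ : ℕ => ℂ) 2)
    (y : ℝ → lp (fun _ : ℕ => ℂ) 2)
    (hy : ∀ s : ℝ, ∀ k : ℕ,
      y s k = (Real.exp (-s ^ 2 / (4 * t)) : ℝ) *
        (Real.cos (s * Real.sqrt (lam k)) : ℝ) * x k)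
    (z : lp (fun _ : ℕ => ℂ) 2)
    (hz : ∀ k : ℕ, z k = (Real.exp (-t * lam k) : ℝ) * x k) :
    Integrable y ∧
      ((4 * π * t) ^ (-(1 / 2 : ℝ)) : ℝ) • ∫ s : ℝ, y s = z := by
  have hcont : ∀ k, Continuous fun s : ℝ => y s k := by
    intro k
    have h : (fun s : ℝ => y s k)
        = fun s : ℝ => ((Real.exp (-s ^ 2 / (4 * t)) : ℝ) : ℂ) *
            ((Real.cos (s * Real.sqrt (lam k)) : ℝ) : ℂ) * x k := funext fun s => hy s k
    rw [h]
    fun_prop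
  have hmeas : StronglyMeasurable y := by
    refine stronglyMeasurable_of_tendsto (f := fun n s =>
      ∑ k ∈ Finset.range n, lp.single 2 k (y s k)) Filter.atTop (fun n => ?_) ?_
    · refine Continuous.stronglyMeasurable ?_
      refine continuous_finset_sum _ fun k _ => ?_
      have h : (fun s : ℝ => lp.single (E := fun _ : ℕ => ℂ) 2 k (y s k))
          = fun s : ℝ => y s k • lp.single 2 k (1 : ℂ) := by
        funext s
        rw [← lp.single_smul]
        simp
      rw [h]
      exact (hcont k).smul continuous_const
    · rw [tendsto_pi_nhds]
      intro s
      exact (lp.hasSum_single (by norm_num) (y s)).tendsto_sum_nat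
  have hbound : ∀ s : ℝ, ‖y s‖ ≤ Real.exp (-s ^ 2 / (4 * t)) * ‖x‖ := by
    intro s
    have h1 : ‖y s‖ ≤ ‖((Real.exp (-s ^ 2 / (4 * t)) : ℝ) : ℂ) • x‖ := by
      refine lp2_norm_le _ _ fun k => ?_
      rw [hy s k, lp.coeFn_smul]
      simp only [Pi.smul_apply, smul_eq_mul, norm_mul, Complex.norm_real]
      have hc : ‖Real.cos (s * Real.sqrt (lam k))‖ ≤ 1 := by
        rw [Real.norm_eq_abs]; exact Real.abs_cos_le_one _
      exact mul_le_mul_of_nonneg_right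
        (mul_le_of_le_one_right (norm_nonneg _) hc) (norm_nonneg _)
    calc ‖y s‖ ≤ ‖((Real.exp (-s ^ 2 / (4 * t)) : ℝ) : ℂ) • x‖ := h1
      _ = Real.exp (-s ^ 2 / (4 * t)) * ‖x‖ := by
          rw [norm_smul, Complex.norm_real, Real.norm_eq_abs,
            abs_of_pos (Real.exp_pos _)]
  have hg : Integrable (fun s : ℝ => Real.exp (-s ^ 2 / (4 * t)) * ‖x‖) :=
    (keyIntegrable ht).mul_const _
  have hInt : Integrable y :=
    hg.mono' hmeas.aestronglyMeasurable (Filter.Eventually.of_forall hbound)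
  refine ⟨hInt, ?_⟩
  apply lp.ext
  funext k
  have hcoord : (∫ s : ℝ, y s) k = ∫ s : ℝ, y s k :=
    ((evCLM k).integral_comp_comm hInt).symm
  have hrw : (fun s : ℝ => y s k)
      = fun s : ℝ => (Real.exp (-s ^ 2 / (4 * t)) * Real.cos (s * Real.sqrt (lam k))) • x k := by
    funext s
    rw [hy s k, Complex.real_smul]
    push_cast
    ring
  have hsq : Real.sqrt (lam k) ^ 2 = lam k := Real.sq_sqrt (hlam k)
  have h4 : (0:ℝ) < 4 * π * t := by positivity
  have hcoef : (4 * π * t) ^ (-(1 / 2 : ℝ)) *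
      (Real.sqrt (4 * π * t) * Real.exp (-t * Real.sqrt (lam k) ^ 2))
      = Real.exp (-t * lam k) := by
    rw [hsq, Real.sqrt_eq_rpow, ← mul_assoc, ← Real.rpow_add h4]
    norm_num
  show (((4 * π * t) ^ (-(1 / 2 : ℝ)) : ℝ) • ∫ s : ℝ, y s) k = z k
  rw [hz k, lp.coeFn_smul, Pi.smul_apply, hcoord, hrw, integral_smul_const,
    keyIntegral ht, smul_smul, hcoef, Complex.real_smul]
end
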